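/- Let $g_n, g_f, g_p$ be independent, with $g_u$ ($u \in \{n,f\}$) Gamma distributed with integer shape $N_u \geq 1$ and scale $\Omega_u > 0$, and $g_p$ exponential with mean $\Omega_p > 0$. Let $I > 0$, $\theta > 0$, and $a_n \in (0, 1/(1+\theta))$, $a_f = 1 - a_n$. Define $\xi_n = \theta \max\{1/(a_f - a_n\theta), 1/a_n\}$ and $\xi_f = \theta/(a_f - a_n\theta)$. Then $1 - \Pr(g_n/g_p \geq \xi_n/I)\Pr(g_f/g_p \geq \xi_f/I) = 1 - \prod_{u\in\{n,f\}}\left[1 - \left(\frac{\Omega_p \xi_u}{\Omega_u I + \Omega_p \xi_u}\right)^{N_u}\right]$. -/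

import Mathlib

open MeasureTheory ProbabilityTheory Real Set
open scoped ENNReal

lemma expMeasure_Iic {r : ℝ} (hr : 0 < r) (t : ℝ) :
    expMeasure r (Iic t) = ENNReal.ofReal (if 0 ≤ t then 1 - exp (-(r * t)) else 0) := by
  rw [expMeasure, gammaMeasure, withDensity_apply _ measurableSet_Iic]
  exact lintegral_exponentialPDF_eq_antiDeriv hr t

lemma expMeasure_Ioc {r : ℝ} (hr : 0 < r) (t : ℝ) :
    expMeasure r (Ioc 0 t) = ENNReal.ofReal (if 0 ≤ t then 1 - exp (-(r * t)) else 0) := by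
  rcases le_or_gt 0 t with h | h
  · have h0 : expMeasure r (Iic (0:ℝ)) = 0 := by
      rw [expMeasure_Iic hr 0]; simp
    refine le_antisymm (((measure_mono Ioc_subset_Iic_self).trans_eq (expMeasure_Iic hr t)))
      ?_
    calc ENNReal.ofReal (if 0 ≤ t then 1 - exp (-(r * t)) else 0)
        = expMeasure r (Iic t) := (expMeasure_Iic hr t).symm
      _ ≤ expMeasure r (Iic 0 ∪ Ioc 0 t) := by
          refine measure_mono ?_
          intro x hx
          rcases le_or_gt x 0 with hx0 | hx0
          · exact Or.inl hx0
          · exact Or.inr ⟨hx0, hx⟩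
      _ ≤ expMeasure r (Iic 0) + expMeasure r (Ioc 0 t) := measure_union_le _ _
      _ = expMeasure r (Ioc 0 t) := by rw [h0, zero_add]
  · rw [Set.Ioc_eq_empty (by intro hh; exact absurd (lt_trans hh h) (lt_irrefl 0)), if_neg (not_le.mpr h)]
    simp

lemma prob_ratio_gamma_exp {Ωs : Type*} [MeasureSpace Ωs]
    [IsProbabilityMeasure (ℙ : Measure Ωs)]
    (X Y : Ωs → ℝ) (hmX : Measurable X) (hmY : Measurable Y)
    (N : ℕ) (hN : 1 ≤ N) (Ω Ωp : ℝ) (hΩ : 0 < Ω) (hΩp : 0 < Ωp)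
    (hX : Measure.map X ℙ = gammaMeasure N Ω⁻¹)
    (hY : Measure.map Y ℙ = expMeasure Ωp⁻¹)
    (hindep : IndepFun X Y ℙ) (c : ℝ) (hc : 0 < c) :
    (ℙ {ω | c ≤ X ω / Y ω}).toReal = 1 - (Ωp * c / (Ω + Ωp * c)) ^ N := by
  have hr : (0:ℝ) < Ωp⁻¹ := by positivity
  set lam : ℝ := Ω⁻¹ with hlam
  set s : ℝ := Ωp⁻¹ / c with hs
  have hlam0 : 0 < lam := by positivity
  have hs0 : 0 < s := by positivity
  -- step 1: Y ≤ 0 is null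
  have hY0 : ℙ {ω | Y ω ≤ 0} = 0 := by
    have : {ω | Y ω ≤ 0} = Y ⁻¹' (Iic 0) := rfl
    rw [this, ← Measure.map_apply hmY measurableSet_Iic, hY, expMeasure_Iic hr]
    simp
  -- step 2: event rewrite
  have hAB : ℙ {ω | c ≤ X ω / Y ω} = ℙ {ω | 0 < Y ω ∧ Y ω ≤ X ω / c} := by
    apply measure_congr
    rw [Filter.eventuallyEq_set]
    filter_upwards [measure_eq_zero_iff_ae_notMem.mp hY0] with ω hω
    have hYpos : 0 < Y ω := lt_of_not_ge hω
    constructor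
    · intro h
      exact ⟨hYpos, (le_div_iff₀ hc).mpr (by rw [mul_comm]; exact (le_div_iff₀ hYpos).mp h)⟩
    · rintro ⟨-, h⟩
      exact (le_div_iff₀ hYpos).mpr (by rw [mul_comm]; exact (le_div_iff₀ hc).mp h)
  -- step 3: product measure
  have hgamma : IsProbabilityMeasure (gammaMeasure (N:ℝ) lam) :=
    isProbabilityMeasure_gammaMeasure (by positivity) hlam0
  have hexp : IsProbabilityMeasure (expMeasure Ωp⁻¹) := isProbabilityMeasure_expMeasure hr
  have hS : MeasurableSet {p : ℝ × ℝ | 0 < p.2 ∧ p.2 ≤ p.1 / c} := by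
    apply MeasurableSet.inter
    · exact measurableSet_lt measurable_const measurable_snd
    · exact measurableSet_le measurable_snd (measurable_fst.div_const c)
  have hprod : Measure.map (fun ω => (X ω, Y ω)) ℙ = (Measure.map X ℙ).prod (Measure.map Y ℙ) :=
    (indepFun_iff_map_prod_eq_prod_map_map hmX.aemeasurable hmY.aemeasurable).mp hindep
  have hB : ℙ {ω | 0 < Y ω ∧ Y ω ≤ X ω / c}
      = ∫⁻ x, expMeasure Ωp⁻¹ (Ioc 0 (x / c)) ∂(gammaMeasure (N:ℝ) lam) := by
    have h1 : {ω | 0 < Y ω ∧ Y ω ≤ X ω / c}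
        = (fun ω => (X ω, Y ω)) ⁻¹' {p : ℝ × ℝ | 0 < p.2 ∧ p.2 ≤ p.1 / c} := rfl
    rw [h1, ← Measure.map_apply (hmX.prodMk hmY) hS, hprod, hX, hY,
      Measure.prod_apply hS]
    refine lintegral_congr fun x => ?_
    congr 1
  -- step 4: rewrite integrand
  have hIntegrand : ∀ x : ℝ, expMeasure Ωp⁻¹ (Ioc 0 (x / c))
      = ENNReal.ofReal (if 0 ≤ x then 1 - exp (-(s * x)) else 0) := by
    intro x
    rw [expMeasure_Ioc hr]
    have h3 : Ωp⁻¹ * (x / c) = s * x := by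
      rw [hs]; ring
    by_cases h2 : 0 ≤ x
    · rw [if_pos ((le_div_iff₀ hc).mpr (by linarith)), if_pos h2, h3]
    · rw [if_neg (by rw [le_div_iff₀ hc]; intro hh; exact h2 (by nlinarith)), if_neg h2]
  -- step 5: the lintegral
  set k : ℝ := (lam / (lam + s)) ^ N with hk
  have hk0 : 0 < lam / (lam + s) := by positivity
  have hk1 : lam / (lam + s) < 1 := by
    rw [div_lt_one (by positivity)]; linarith
  have hkpos : 0 < k := pow_pos hk0 N
  have hkle : k ≤ 1 := pow_le_one₀ hk0.le hk1.le
  have hmeas_h : Measurable (fun x : ℝ => ENNReal.ofReal (if 0 ≤ x then 1 - exp (-(s * x)) else 0)) := by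
    apply Measurable.ennreal_ofReal
    exact Measurable.ite measurableSet_Ici (by fun_prop) measurable_const
  set h : ℝ → ℝ≥0∞ := fun x => ENNReal.ofReal (if 0 ≤ x then 1 - exp (-(s * x)) else 0) with hh
  have hG : 0 < Gamma (N:ℝ) := Gamma_pos_of_pos (by positivity)
  have hls : (0:ℝ) < lam + s := by positivity
  have hpow : k * (lam + s) ^ N = lam ^ N := by
    rw [hk, ← mul_pow, div_mul_cancel₀ _ hls.ne']
  -- pointwise identity
  have hpoint : ∀ x : ℝ,
      gammaPDF (N:ℝ) lam x * h x + ENNReal.ofReal k * gammaPDF (N:ℝ) (lam + s) x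
        = gammaPDF (N:ℝ) lam x := by
    intro x
    by_cases hx : 0 ≤ x
    · have hxp : 0 ≤ x ^ ((N:ℝ) - 1) := Real.rpow_nonneg hx _
      have hpdf1 : 0 ≤ lam ^ (N:ℝ) / Gamma (N:ℝ) * x ^ ((N:ℝ)-1) * exp (-(lam * x)) := by
        positivity
      have hpdf2 : 0 ≤ (lam + s) ^ (N:ℝ) / Gamma (N:ℝ) * x ^ ((N:ℝ)-1) * exp (-((lam + s) * x)) := by
        positivity
      have hes : exp (-(s * x)) ≤ 1 := by
        rw [exp_le_one_iff]; nlinarith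
      have hexp2 : exp (-((lam + s) * x)) = exp (-(lam * x)) * exp (-(s * x)) := by
        rw [← exp_add]; ring_nf
      have hreal : lam ^ (N:ℝ) / Gamma (N:ℝ) * x ^ ((N:ℝ)-1) * exp (-(lam * x)) * (1 - exp (-(s * x)))
          + k * ((lam + s) ^ (N:ℝ) / Gamma (N:ℝ) * x ^ ((N:ℝ)-1) * exp (-((lam + s) * x)))
          = lam ^ (N:ℝ) / Gamma (N:ℝ) * x ^ ((N:ℝ)-1) * exp (-(lam * x)) := by
        simp only [Real.rpow_natCast]
        rw [hexp2]
        have h9 : k * ((lam + s) ^ N / Gamma (N:ℝ) * x ^ ((N:ℝ)-1) * (exp (-(lam * x)) * exp (-(s * x))))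
            = lam ^ N / Gamma (N:ℝ) * x ^ ((N:ℝ)-1) * exp (-(lam * x)) * exp (-(s * x)) := by
          rw [← hpow]
          ring
        linear_combination h9
      rw [gammaPDF_of_nonneg hx, gammaPDF_of_nonneg hx, hh]
      simp only [if_pos hx]
      rw [← ENNReal.ofReal_mul hpdf1, ← ENNReal.ofReal_mul hkpos.le,
        ← ENNReal.ofReal_add (by nlinarith) (by positivity), hreal]
    · push_neg at hx
      rw [gammaPDF_of_neg hx, gammaPDF_of_neg hx, hh]
      simp [if_neg (not_le.mpr hx)]
  -- integrate
  have hmeas_pdf1 : Measurable (gammaPDF (N:ℝ) lam) :=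
    (measurable_gammaPDFReal (N:ℝ) lam).ennreal_ofReal
  have hmeas_pdf2 : Measurable (gammaPDF (N:ℝ) (lam + s)) :=
    (measurable_gammaPDFReal (N:ℝ) (lam + s)).ennreal_ofReal
  have hT : ℙ {ω | c ≤ X ω / Y ω} = ∫⁻ x, gammaPDF (N:ℝ) lam x * h x := by
    rw [hAB, hB, lintegral_congr hIntegrand, gammaMeasure,
      lintegral_withDensity_eq_lintegral_mul _ hmeas_pdf1 hmeas_h]
    rfl
  have hsum : (∫⁻ x, gammaPDF (N:ℝ) lam x * h x) + ENNReal.ofReal k = 1 := by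
    have h1 : ∫⁻ x, (gammaPDF (N:ℝ) lam x * h x + ENNReal.ofReal k * gammaPDF (N:ℝ) (lam + s) x)
        = ∫⁻ x, gammaPDF (N:ℝ) lam x := lintegral_congr hpoint
    rw [lintegral_add_right _ (hmeas_pdf2.const_mul _), lintegral_const_mul _ hmeas_pdf2,
      lintegral_gammaPDF_eq_one (by positivity : (0:ℝ) < (N:ℝ)) hls,
      lintegral_gammaPDF_eq_one (by positivity : (0:ℝ) < (N:ℝ)) hlam0, mul_one] at h1
    exact h1
  have hfinal : ℙ {ω | c ≤ X ω / Y ω} = 1 - ENNReal.ofReal k := by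
    rw [hT]
    exact ENNReal.eq_sub_of_add_eq ENNReal.ofReal_ne_top hsum
  rw [hfinal, ENNReal.toReal_sub_of_le (by simpa using ENNReal.ofReal_le_one.mpr hkle)
    ENNReal.one_ne_top, ENNReal.toReal_one, ENNReal.toReal_ofReal hkpos.le]
  congr 1
  rw [hk]
  congr 1
  rw [hlam, hs]
  field_simp
  ring

theorem outage_IntICSI {Ωs : Type*} [MeasureSpace Ωs]
    [IsProbabilityMeasure (ℙ : Measure Ωs)]
    (gn gf gp : Ωs → ℝ) (hmn : Measurable gn) (hmf : Measurable gf) (hmp : Measurable gp)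
    (Nn Nf : ℕ) (hNn : 1 ≤ Nn) (hNf : 1 ≤ Nf)
    (Ωn Ωf Ωp : ℝ) (hΩn : 0 < Ωn) (hΩf : 0 < Ωf) (hΩp : 0 < Ωp)
    (hgn : Measure.map gn ℙ = gammaMeasure Nn Ωn⁻¹)
    (hgf : Measure.map gf ℙ = gammaMeasure Nf Ωf⁻¹)
    (hgp : Measure.map gp ℙ = expMeasure Ωp⁻¹)
    (hind : iIndepFun ![gn, gf, gp] ℙ)
    (I θ an : ℝ) (hI : 0 < I) (hθ : 0 < θ) (han : an ∈ Set.Ioo (0 : ℝ) (1 / (1 + θ)))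
    (af ξn ξf : ℝ) (haf : af = 1 - an)
    (hξn : ξn = θ * max (1 / (af - an * θ)) (1 / an))
    (hξf : ξf = θ / (af - an * θ)) :
    1 - (ℙ {ω | ξn / I ≤ gn ω / gp ω}).toReal * (ℙ {ω | ξf / I ≤ gf ω / gp ω}).toReal
      = 1 - (1 - (Ωp * ξn / (Ωn * I + Ωp * ξn)) ^ Nn)
          * (1 - (Ωp * ξf / (Ωf * I + Ωp * ξf)) ^ Nf) := by
  have hindnp : IndepFun gn gp ℙ := by
    have := hind.indepFun (show (0 : Fin 3) ≠ 2 by decide)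
    simpa using this
  have hindfp : IndepFun gf gp ℙ := by
    have := hind.indepFun (show (1 : Fin 3) ≠ 2 by decide)
    simpa using this
  have h1θ : (0:ℝ) < 1 + θ := by linarith
  have haf' : 0 < af - an * θ := by
    have h2 : an * (1 + θ) < 1 := by
      have := han.2
      rw [lt_div_iff₀ h1θ] at this
      linarith
    rw [haf]; nlinarith
  have hξf0 : 0 < ξf := by rw [hξf]; positivity
  have hξn0 : 0 < ξn := by
    rw [hξn]
    have : (0:ℝ) < 1 / (af - an * θ) := by positivity
    exact mul_pos hθ (lt_of_lt_of_le this (le_max_left _ _))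
  have key : ∀ (Ω ξ : ℝ), 0 < Ω → 0 < ξ →
      Ωp * (ξ / I) / (Ω + Ωp * (ξ / I)) = Ωp * ξ / (Ω * I + Ωp * ξ) := by
    intro Ω ξ hΩ hξ
    rw [div_eq_div_iff (by positivity) (by positivity)]
    field_simp
  rw [prob_ratio_gamma_exp gn gp hmn hmp Nn hNn Ωn Ωp hΩn hΩp hgn hgp hindnp (ξn / I)
      (by positivity),
    prob_ratio_gamma_exp gf gp hmf hmp Nf hNf Ωf Ωp hΩf hΩp hgf hgp hindfp (ξf / I)
      (by positivity),
    key Ωn ξn hΩn hξn0, key Ωf ξf hΩf hξf0]
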